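/- Let Y be a compact metric space and f₁,…,f_m : Y → Y maps with Lipschitz constants λ₁,…,λ_m < 1. Let a₁,…,a_m be positive reals with ∑aᵢ = 1. Then there exists a unique Borel probability measure μ₀ on Y satisfying μ₀ = ∑_{i=1}^m aᵢ (fᵢ)_*(μ₀), i.e., μ₀(A) = ∑ aᵢ μ₀(fᵢ⁻¹(A)) for every Borel set A ⊆ Y. -/

import Mathlib

set_option maxHeartbeats 1000000

open MeasureTheory Metric Filter Set

lemma lipschitz_finset_sum {ι Y : Type*} [PseudoMetricSpace Y] (s : Finset ι)
    (K : ι → NNReal) (g : ι → Y → ℝ) (h : ∀ i ∈ s, LipschitzWith (K i) (g i)) :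
    LipschitzWith (∑ i ∈ s, K i) (fun x => ∑ i ∈ s, g i x) := by
  classical
  induction s using Finset.cons_induction with
  | empty => simpa using (LipschitzWith.const (0:ℝ))
  | cons j s hj ih =>
      simp only [Finset.sum_cons]
      exact (h j (Finset.mem_cons_self j s)).add
        (ih (fun i hi => h i (Finset.mem_cons_of_mem hi)))

theorem unique_aux {Y : Type*} [MetricSpace Y] [CompactSpace Y] [Nonempty Y]
    [MeasurableSpace Y] [BorelSpace Y]
    (m : ℕ) (f : Fin m → Y → Y) (lam : Fin m → NNReal)
    (hlam : ∀ i, lam i < 1) (hf : ∀ i, LipschitzWith (lam i) (f i))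
    (a : Fin m → NNReal) (hsum : ∑ i, a i = 1)
    (μ ν : Measure Y) [IsProbabilityMeasure μ] [IsProbabilityMeasure ν]
    (hμ : μ = ∑ i, a i • Measure.map (f i) μ)
    (hν : ν = ∑ i, a i • Measure.map (f i) ν) : μ = ν := by
  -- integrability of continuous functions
  have hint : ∀ (κ : Measure Y) [IsFiniteMeasure κ] (ψ : Y → ℝ), Continuous ψ → Integrable ψ κ := by
    intro κ _ ψ hψ
    rw [← integrableOn_univ]
    exact hψ.continuousOn.integrableOn_compact isCompact_univ
  set c : NNReal := (Finset.univ.sup lam) ⊔ (1/2) with hc_def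
  have hc1 : c < 1 := by
    apply sup_lt_iff.mpr
    constructor
    · exact Finset.sup_lt_iff (by norm_num) |>.mpr (fun i _ => hlam i)
    · rw [← NNReal.coe_lt_coe]; norm_num
  have hci : ∀ i, lam i ≤ c := fun i => le_trans (Finset.le_sup (Finset.mem_univ i)) le_sup_left
  have hc0 : (0:NNReal) < c := lt_of_lt_of_le (by norm_num) le_sup_right
  have hc0' : ((c:ℝ)) ≠ 0 := by positivity
  set D : ℝ := 2 * diam (univ : Set Y) with hD_def
  have hD0 : 0 ≤ D := by positivity
  -- the invariance identity at the level of integrals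
  have hinv : ∀ (κ : Measure Y) [IsProbabilityMeasure κ],
      κ = ∑ i, a i • Measure.map (f i) κ → ∀ φ : Y → ℝ, Continuous φ →
      ∫ x, φ x ∂κ = ∑ i, (a i : ℝ) * ∫ x, φ (f i x) ∂κ := by
    intro κ _ hκ φ hφ
    conv_lhs => rw [hκ]
    rw [integral_finset_sum_measure]
    · refine Finset.sum_congr rfl (fun i _ => ?_)
      have h1 : ∫ x, φ x ∂(a i • Measure.map (f i) κ)
          = (a i : ℝ) • ∫ x, φ x ∂(Measure.map (f i) κ) :=
        integral_smul_nnreal_measure φ (a i)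
      rw [h1, integral_map (hf i).continuous.measurable.aemeasurable
        hφ.aestronglyMeasurable, smul_eq_mul]
    · intro i _
      have : IsFiniteMeasure (Measure.map (f i) κ) := by
        have : IsProbabilityMeasure (Measure.map (f i) κ) :=
          Measure.isProbabilityMeasure_map (hf i).continuous.measurable.aemeasurable
        infer_instance
      exact (hint _ φ hφ).smul_measure ENNReal.coe_ne_top
  -- key contraction estimate
  have key : ∀ n : ℕ, ∀ φ : Y → ℝ, LipschitzWith 1 φ →
      |∫ x, φ x ∂μ - ∫ x, φ x ∂ν| ≤ (c:ℝ)^n * D := by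
    intro n
    induction n with
    | zero =>
      intro φ hφ
      obtain ⟨y₀⟩ := (inferInstance : Nonempty Y)
      have hbd : ∀ x : Y, |φ x - φ y₀| ≤ diam (univ : Set Y) := by
        intro x
        have := hφ.dist_le_mul x y₀
        rw [Real.dist_eq] at this
        refine le_trans (by simpa using this) ?_
        exact dist_le_diam_of_mem isCompact_univ.isBounded trivial trivial
      have habs : ∀ (κ : Measure Y) [IsProbabilityMeasure κ],
          |∫ x, φ x ∂κ - φ y₀| ≤ diam (univ : Set Y) := by
        intro κ _
        have h1 : ∫ x, φ x ∂κ - φ y₀ = ∫ x, (φ x - φ y₀) ∂κ := by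
          rw [integral_sub (hint κ φ hφ.continuous) (integrable_const _), integral_const]
          simp
        rw [h1]
        calc |∫ x, (φ x - φ y₀) ∂κ| ≤ ∫ x, |φ x - φ y₀| ∂κ := by
              simpa using norm_integral_le_integral_norm (μ := κ) (fun x => φ x - φ y₀)
          _ ≤ ∫ _x, diam (univ : Set Y) ∂κ := by
              refine integral_mono ?_ (integrable_const _) hbd
              exact ((hint κ φ hφ.continuous).sub (integrable_const _)).abs
          _ = diam (univ : Set Y) := by simp
      have := abs_sub (∫ x, φ x ∂μ - φ y₀) (∫ x, φ x ∂ν - φ y₀)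
      calc |∫ x, φ x ∂μ - ∫ x, φ x ∂ν|
          = |(∫ x, φ x ∂μ - φ y₀) - (∫ x, φ x ∂ν - φ y₀)| := by ring_nf
        _ ≤ |∫ x, φ x ∂μ - φ y₀| + |∫ x, φ x ∂ν - φ y₀| := abs_sub _ _
        _ ≤ diam (univ : Set Y) + diam (univ : Set Y) := add_le_add (habs μ) (habs ν)
        _ ≤ (c:ℝ)^0 * D := by rw [pow_zero, one_mul, hD_def]; ring_nf; rfl
    | succ n ih =>
      intro φ hφ
      set ψ : Y → ℝ := fun x => (c:ℝ)⁻¹ * ∑ i, (a i : ℝ) * φ (f i x) with hψ_def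
      have hsumlip : LipschitzWith (∑ i, a i * lam i) (fun x => ∑ i, (a i:ℝ) * φ (f i x)) := by
        apply lipschitz_finset_sum
        intro i _
        have h1 : LipschitzWith (1 * lam i) (fun x => φ (f i x)) := hφ.comp (hf i)
        have h2 := (lipschitzWith_smul (α := ℝ) (β := ℝ) ((a i : ℝ))).comp h1
        have h3 : ‖(a i : ℝ)‖₊ = a i := by
          ext; simp [Real.norm_eq_abs, abs_of_nonneg (a i).coe_nonneg]
        simpa [h3, smul_eq_mul, one_mul, Function.comp_def] using h2
      have hψlip : LipschitzWith 1 ψ := by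
        have h2 := (lipschitzWith_smul (α := ℝ) (β := ℝ) ((c : ℝ)⁻¹)).comp hsumlip
        have h3 : ‖((c:ℝ))⁻¹‖₊ = c⁻¹ := by
          rw [nnnorm_inv]
          congr 1
          ext; simp [Real.norm_eq_abs, abs_of_nonneg c.coe_nonneg]
        have h4 : (c⁻¹ * ∑ i, a i * lam i : NNReal) ≤ 1 := by
          have : (∑ i, a i * lam i) ≤ c := by
            calc (∑ i, a i * lam i) ≤ ∑ i, a i * c :=
                  Finset.sum_le_sum (fun i _ => mul_le_mul_right (hci i) _)
              _ = c := by rw [← Finset.sum_mul, hsum, one_mul]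
          calc c⁻¹ * (∑ i, a i * lam i) ≤ c⁻¹ * c := mul_le_mul_right this _
            _ = 1 := by
              rw [inv_mul_cancel₀ (by exact_mod_cast hc0.ne')]
        refine LipschitzWith.weaken ?_ h4
        simpa [h3, smul_eq_mul, Function.comp_def, hψ_def] using h2
      have hφc : Continuous φ := hφ.continuous
      have hrewrite : ∀ (κ : Measure Y) [IsProbabilityMeasure κ],
          κ = ∑ i, a i • Measure.map (f i) κ → ∫ x, φ x ∂κ = (c:ℝ) * ∫ x, ψ x ∂κ := by
        intro κ _ hκ
        rw [hinv κ hκ φ hφc]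
        have : ∫ x, ψ x ∂κ = (c:ℝ)⁻¹ * ∑ i, (a i:ℝ) * ∫ x, φ (f i x) ∂κ := by
          rw [hψ_def]
          simp only
          rw [integral_const_mul]
          congr 1
          rw [integral_finset_sum]
          · refine Finset.sum_congr rfl (fun i _ => ?_)
            rw [integral_const_mul]
          · intro i _
            exact ((hint κ _ (hφc.comp (hf i).continuous)).const_mul _)
        rw [this, ← mul_assoc, mul_inv_cancel₀ hc0', one_mul]
      rw [hrewrite μ hμ, hrewrite ν hν, ← mul_sub, abs_mul, abs_of_nonneg (by positivity : (0:ℝ) ≤ (c:ℝ))]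
      calc (c:ℝ) * |∫ x, ψ x ∂μ - ∫ x, ψ x ∂ν| ≤ (c:ℝ) * ((c:ℝ)^n * D) :=
            mul_le_mul_of_nonneg_left (ih ψ hψlip) (by positivity)
        _ = (c:ℝ)^(n+1) * D := by ring
  -- all Lipschitz functions have equal integrals
  have heq : ∀ (K : NNReal) (φ : Y → ℝ), LipschitzWith K φ → ∫ x, φ x ∂μ = ∫ x, φ x ∂ν := by
    intro K φ hφ
    have h1 : LipschitzWith 1 (fun x => ((K:ℝ)+1)⁻¹ * φ x) := by
      have h2 := (lipschitzWith_smul (α := ℝ) (β := ℝ) (((K:ℝ)+1)⁻¹)).comp hφ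
      have hK1 : (0:ℝ) < (K:ℝ) + 1 := by positivity
      have hle : ‖((K:ℝ)+1)⁻¹‖₊ * K ≤ 1 := by
        have hn : ‖((K:ℝ)+1)⁻¹‖₊ = (K+1)⁻¹ := by
          ext
          rw [coe_nnnorm, Real.norm_eq_abs, abs_of_nonneg (by positivity)]
          push_cast
          ring
        rw [hn]
        calc (K+1)⁻¹ * K ≤ (K+1)⁻¹ * (K+1) := mul_le_mul_right (le_add_right le_rfl) _
          _ = 1 := inv_mul_cancel₀ (by
              intro h
              have := le_add_self (a := (1:NNReal)) (b := K)
              rw [h] at this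
              exact absurd this (by norm_num))
      exact LipschitzWith.weaken (by simpa [smul_eq_mul, Function.comp_def] using h2) hle
    have h2 : ∀ n : ℕ, |∫ x, (fun x => ((K:ℝ)+1)⁻¹ * φ x) x ∂μ
        - ∫ x, (fun x => ((K:ℝ)+1)⁻¹ * φ x) x ∂ν| ≤ (c:ℝ)^n * D := fun n => key n _ h1
    have h3 : |((K:ℝ)+1)⁻¹ * ∫ x, φ x ∂μ - ((K:ℝ)+1)⁻¹ * ∫ x, φ x ∂ν| ≤ 0 := by
      have htend : Tendsto (fun n : ℕ => (c:ℝ)^n * D) atTop (nhds 0) := by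
        rw [show (0:ℝ) = 0 * D by ring]
        exact (tendsto_pow_atTop_nhds_zero_of_lt_one c.coe_nonneg (by exact_mod_cast hc1)).mul_const D
      refine ge_of_tendsto htend (Eventually.of_forall (fun n => ?_))
      have := h2 n
      simpa [integral_const_mul] using this
    have h4 : ((K:ℝ)+1)⁻¹ * ∫ x, φ x ∂μ = ((K:ℝ)+1)⁻¹ * ∫ x, φ x ∂ν := by
      have := abs_nonneg (((K:ℝ)+1)⁻¹ * ∫ x, φ x ∂μ - ((K:ℝ)+1)⁻¹ * ∫ x, φ x ∂ν)
      have h5 := le_antisymm h3 this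
      linarith [sub_eq_zero.mp (abs_eq_zero.mp h5)]
    have hK1 : ((K:ℝ)+1)⁻¹ ≠ 0 := by
      have : (0:ℝ) < (K:ℝ)+1 := by positivity
      positivity
    exact mul_left_cancel₀ hK1 h4
  -- measures agree on closed sets
  have hclosed : ∀ F : Set Y, IsClosed F → μ F = ν F := by
    intro F hF
    rcases F.eq_empty_or_nonempty with rfl | hFne
    · simp
    have hq : ∀ n : ℕ, ∫ x, max (1 - (n:ℝ) * infDist x F) 0 ∂μ
        = ∫ x, max (1 - (n:ℝ) * infDist x F) 0 ∂ν := by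
      intro n
      have hlip1 : LipschitzWith (‖(n:ℝ)‖₊ * 1) (fun x : Y => (n:ℝ) * infDist x F) := by
        exact (lipschitzWith_smul (α := ℝ) (β := ℝ) ((n:ℝ))).comp (lipschitz_infDist_pt F)
      have hlip2 : LipschitzWith (‖(n:ℝ)‖₊ * 1) (fun x : Y => 1 - (n:ℝ) * infDist x F) := by
        simpa using (LipschitzWith.const (1:ℝ)).sub hlip1
      have hlip3 : LipschitzWith ((‖(n:ℝ)‖₊ * 1) ⊔ 0) (fun x : Y => max (1 - (n:ℝ) * infDist x F) 0) := by
        exact hlip2.max (LipschitzWith.const (0:ℝ))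
      exact heq _ _ hlip3
    have htendμν : ∀ (κ : Measure Y) [IsProbabilityMeasure κ],
        Tendsto (fun n : ℕ => ∫ x, max (1 - (n:ℝ) * infDist x F) 0 ∂κ) atTop
          (nhds ((κ F).toReal)) := by
      intro κ _
      have h0 : ∫ x, F.indicator (fun _ => (1:ℝ)) x ∂κ = (κ F).toReal := by
        rw [integral_indicator_const _ hF.measurableSet]
        simp [Measure.real]
      rw [← h0]
      apply tendsto_integral_of_dominated_convergence (fun _ => (1:ℝ))
      · intro n
        refine Continuous.aestronglyMeasurable ?_
        exact (continuous_const.sub (continuous_const.mul (continuous_infDist_pt F))).max continuous_const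
      · exact integrable_const _
      · intro n
        refine Eventually.of_forall (fun x => ?_)
        rw [Real.norm_eq_abs, abs_of_nonneg (le_max_right _ _)]
        refine max_le ?_ (by norm_num)
        have : 0 ≤ (n:ℝ) * infDist x F := mul_nonneg (Nat.cast_nonneg n) infDist_nonneg
        linarith
      · refine Eventually.of_forall (fun x => ?_)
        by_cases hx : x ∈ F
        · have : infDist x F = 0 := infDist_zero_of_mem hx
          simp [this, hx]
        · have hd : 0 < infDist x F := (hF.notMem_iff_infDist_pos hFne).mp hx
          have : F.indicator (fun _ => (1:ℝ)) x = 0 := by simp [hx]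
          rw [this]
          apply tendsto_atTop_of_eventually_const (i₀ := Nat.ceil ((infDist x F)⁻¹) + 1)
          intro n hn
          have hn' : (infDist x F)⁻¹ ≤ (n:ℝ) := by
            calc (infDist x F)⁻¹ ≤ (Nat.ceil ((infDist x F)⁻¹) : ℝ) := Nat.le_ceil _
              _ ≤ (n:ℝ) := by
                have : (⌈(infDist x F)⁻¹⌉₊ : ℕ) ≤ n := le_trans (Nat.le_succ _) hn
                exact_mod_cast this
          have : 1 ≤ (n:ℝ) * infDist x F := by
            rw [← inv_mul_cancel₀ hd.ne']
            exact mul_le_mul_of_nonneg_right hn' hd.le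
          have : 1 - (n:ℝ) * infDist x F ≤ 0 := by linarith
          rw [max_eq_right this]
    have h6 : (μ F).toReal = (ν F).toReal := by
      refine tendsto_nhds_unique (htendμν μ) ?_
      simp_rw [hq]
      exact htendμν ν
    exact (ENNReal.toReal_eq_toReal_iff' (measure_ne_top μ F) (measure_ne_top ν F)).mp h6
  -- conclude
  refine ext_of_generate_finite {s | IsClosed s} ?_ isPiSystem_isClosed
    (fun s hs => hclosed s hs) (hclosed univ isClosed_univ)
  rw [BorelSpace.measurable_eq (α := Y), borel_eq_generateFrom_isClosed]

theorem exists_aux {Y : Type*} [MetricSpace Y] [CompactSpace Y] [Nonempty Y]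
    [MeasurableSpace Y] [BorelSpace Y]
    (m : ℕ) (hm : 0 < m) (f : Fin m → Y → Y) (lam : Fin m → NNReal)
    (hlam : ∀ i, lam i < 1) (hf : ∀ i, LipschitzWith (lam i) (f i))
    (a : Fin m → NNReal) (ha : ∀ i, 0 < a i) (hsum : ∑ i, a i = 1) :
    ∃ μ : Measure Y, IsProbabilityMeasure μ ∧ μ = ∑ i, a i • Measure.map (f i) μ := by
  classical
  obtain ⟨y₀⟩ := (inferInstance : Nonempty Y)
  set A : Fin m → ℝ := fun i => (a i : ℝ) with hA_def
  have hA : ∀ i, 0 < A i := fun i => by exact_mod_cast ha i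
  have hsumA : ∑ i, A i = 1 := by
    have := congrArg (fun x : NNReal => (x : ℝ)) hsum
    push_cast at this
    simpa using this
  set L : Fin m → ℝ := fun i => ∑ j ∈ Finset.Iio i, A j with hL_def
  set J : Fin m → Set ℝ := fun i => Set.Ico (L i) (L i + A i) with hJ_def
  have hL0 : ∀ i, 0 ≤ L i := fun i => Finset.sum_nonneg (fun j _ => (hA j).le)
  have hIic : ∀ i, L i + A i = ∑ j ∈ Finset.Iic i, A j := by
    intro i
    rw [← Finset.Iio_insert, Finset.sum_insert (by simp), hL_def]
    ring
  have hL1 : ∀ i, L i + A i ≤ 1 := by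
    intro i
    rw [hIic i, ← hsumA]
    exact Finset.sum_le_sum_of_subset_of_nonneg (Finset.subset_univ _) (fun j _ _ => (hA j).le)
  have hmono : ∀ i j : Fin m, i < j → L i + A i ≤ L j := by
    intro i j hij
    rw [hIic i, hL_def]
    refine Finset.sum_le_sum_of_subset_of_nonneg ?_ (fun k _ _ => (hA k).le)
    intro k hk
    exact Finset.mem_Iio.mpr (lt_of_le_of_lt (Finset.mem_Iic.mp hk) hij)
  have huniq : ∀ (i j : Fin m) (x : ℝ), x ∈ J i → x ∈ J j → i = j := by
    intro i j x hi hj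
    by_contra hne
    rcases lt_or_gt_of_ne hne with h | h
    · exact lt_irrefl x (lt_of_lt_of_le hi.2 (le_trans (hmono i j h) hj.1))
    · exact lt_irrefl x (lt_of_lt_of_le hj.2 (le_trans (hmono j i h) hi.1))
  have hJsub : ∀ i, J i ⊆ Set.Ico (0:ℝ) 1 := fun i => Set.Ico_subset_Ico (hL0 i) (hL1 i)
  have hL0bot : L ⟨0, hm⟩ = 0 := by
    rw [hL_def]
    simp only
    have : Finset.Iio (⟨0, hm⟩ : Fin m) = ∅ := by
      ext j
      simp [Finset.mem_Iio, Fin.lt_def]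
    rw [this, Finset.sum_empty]
  have hcover : ∀ x, x ∈ Set.Ico (0:ℝ) 1 → ∃ i, x ∈ J i := by
    intro x hx
    have hsne : (Finset.univ.filter (fun i : Fin m => L i ≤ x)).Nonempty :=
      ⟨⟨0, hm⟩, Finset.mem_filter.mpr ⟨Finset.mem_univ _, by rw [hL0bot]; exact hx.1⟩⟩
    obtain ⟨i, hi_mem, hi_max⟩ : ∃ i ∈ Finset.univ.filter (fun i : Fin m => L i ≤ x),
        ∀ j ∈ Finset.univ.filter (fun i : Fin m => L i ≤ x), j ≤ i :=
      ⟨_, Finset.max'_mem _ hsne, fun j hj => Finset.le_max' _ j hj⟩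
    have hiL : L i ≤ x := (Finset.mem_filter.mp hi_mem).2
    refine ⟨i, hiL, ?_⟩
    by_contra hnot
    push_neg at hnot
    rcases lt_or_ge ((i:ℕ)+1) m with h1 | h1
    · obtain ⟨i', hi'val⟩ : ∃ i' : Fin m, (i':ℕ) = (i:ℕ)+1 := ⟨⟨_, h1⟩, rfl⟩
      have hLi' : L i' = L i + A i := by
        rw [hIic i]
        have hs : Finset.Iio i' = Finset.Iic i := by
          ext j
          simp only [Finset.mem_Iio, Finset.mem_Iic, Fin.lt_def, Fin.le_def, hi'val]
          omega
        simp only [hL_def]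
        rw [hs]
      have hi's : i' ∈ Finset.univ.filter (fun i : Fin m => L i ≤ x) :=
        Finset.mem_filter.mpr ⟨Finset.mem_univ _, by rw [hLi']; exact hnot⟩
      have hle := hi_max i' hi's
      have hii' : i < i' := by
        rw [Fin.lt_def, hi'val]
        omega
      exact absurd hle (not_le.mpr hii')
    · have huniv : Finset.Iic i = Finset.univ := by
        ext j
        simp only [Finset.mem_Iic, Finset.mem_univ, iff_true, Fin.le_def]
        omega
      have h2 : (1:ℝ) ≤ x := by
        calc (1:ℝ) = ∑ j, A j := hsumA.symm
          _ = L i + A i := by rw [hIic i, huniv]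
          _ ≤ x := hnot
      exact absurd hx.2 (not_lt.mpr h2)
  -- the digit map
  set d : ℝ → Fin m := fun x => if h : ∃ i, x ∈ J i then h.choose else ⟨0, hm⟩ with hd_def
  have hdJ : ∀ (i : Fin m) (x : ℝ), x ∈ J i → d x = i := by
    intro i x hx
    have h : ∃ i, x ∈ J i := ⟨i, hx⟩
    rw [hd_def]
    simp only
    rw [dif_pos h]
    exact huniq _ _ _ h.choose_spec hx
  have hd_meas : Measurable d := by
    apply measurable_to_countable'
    intro i
    have key : d ⁻¹' {i} = J i ∪ (if i = (⟨0, hm⟩ : Fin m) then (Set.Ico (0:ℝ) 1)ᶜ else ∅) := by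
      ext x
      simp only [Set.mem_preimage, Set.mem_singleton_iff, Set.mem_union]
      constructor
      · intro hdx
        by_cases h : ∃ j, x ∈ J j
        · obtain ⟨j, hj⟩ := h
          have hj' := hdJ j x hj
          rw [hj'] at hdx
          subst hdx
          exact Or.inl hj
        · right
          have hd0 : d x = ⟨0, hm⟩ := by
            rw [hd_def]; simp only; rw [dif_neg h]
          have hieq : i = (⟨0, hm⟩ : Fin m) := by rw [← hdx, hd0]
          rw [if_pos hieq]
          exact fun hxmem => h (hcover x hxmem)
      · rintro (hx | hx)
        · exact hdJ i x hx
        · by_cases hieq : i = (⟨0, hm⟩ : Fin m)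
          · rw [if_pos hieq] at hx
            have h : ¬ ∃ j, x ∈ J j := by
              rintro ⟨j, hj⟩
              exact hx (hJsub j hj)
            rw [hd_def]; simp only; rw [dif_neg h, hieq]
          · rw [if_neg hieq] at hx
            exact absurd hx (Set.notMem_empty x)
    rw [key]
    refine MeasurableSet.union measurableSet_Ico ?_
    split
    · exact measurableSet_Ico.compl
    · exact MeasurableSet.empty
  set σ : ℝ → ℝ := fun x => (x - L (d x)) / A (d x) with hσ_def
  have hσ_meas : Measurable σ := by
    refine Measurable.div ?_ ?_
    · exact measurable_id.sub ((measurable_of_countable L).comp hd_meas)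
    · exact (measurable_of_countable A).comp hd_meas
  -- the iterated maps
  set g : ℕ → ℝ → Y :=
    fun n => Nat.rec (motive := fun _ => ℝ → Y) (fun _ => y₀)
      (fun _ ih x => f (d x) (ih (σ x))) n with hg_def
  have hgs : ∀ (n : ℕ) (x : ℝ), g (n+1) x = f (d x) (g n (σ x)) := fun n x => rfl
  have hg_meas : ∀ n, Measurable (g n) := by
    intro n
    induction n with
    | zero => exact measurable_const
    | succ n ih =>
      have hF : Measurable (fun p : Y × Fin m => f p.2 p.1) :=
        measurable_from_prod_countable_left (fun i => (hf i).continuous.measurable)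
      exact hF.comp ((ih.comp hσ_meas).prodMk hd_meas)
  -- contraction
  set c : NNReal := (Finset.univ.sup lam) ⊔ (1/2) with hc_def
  have hc1 : c < 1 := by
    apply sup_lt_iff.mpr
    constructor
    · exact Finset.sup_lt_iff (by norm_num) |>.mpr (fun i _ => hlam i)
    · rw [← NNReal.coe_lt_coe]; norm_num
  have hci : ∀ i, lam i ≤ c := fun i => le_trans (Finset.le_sup (Finset.mem_univ i)) le_sup_left
  set D : ℝ := diam (univ : Set Y) with hDdef
  have hD : ∀ y z : Y, dist y z ≤ D :=
    fun y z => dist_le_diam_of_mem isCompact_univ.isBounded trivial trivial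
  have hD0 : 0 ≤ D := diam_nonneg
  have hgdist : ∀ (n : ℕ) (x : ℝ), dist (g n x) (g (n+1) x) ≤ D * (c:ℝ)^n := by
    intro n
    induction n with
    | zero =>
      intro x
      rw [pow_zero, mul_one]
      exact hD _ _
    | succ n ih =>
      intro x
      rw [hgs n x, hgs (n+1) x]
      calc dist (f (d x) (g n (σ x))) (f (d x) (g (n+1) (σ x)))
          ≤ (lam (d x) : ℝ) * dist (g n (σ x)) (g (n+1) (σ x)) := (hf (d x)).dist_le_mul _ _
        _ ≤ (c:ℝ) * (D * (c:ℝ)^n) :=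
            mul_le_mul (by exact_mod_cast hci (d x)) (ih (σ x)) dist_nonneg c.coe_nonneg
        _ = D * (c:ℝ)^(n+1) := by ring
  have hcauchy : ∀ x, ∃ y, Tendsto (fun n => g n x) atTop (nhds y) := by
    intro x
    have : CauchySeq (fun n => g n x) :=
      cauchySeq_of_le_geometric (c:ℝ) D (by exact_mod_cast hc1)
        (fun n => by simpa [mul_comm] using hgdist n x)
    exact cauchySeq_tendsto_of_complete this
  choose π hπ using hcauchy
  have hπ_meas : Measurable π := measurable_of_tendsto_metrizable hg_meas (tendsto_pi_nhds.mpr hπ)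
  have hπfix : ∀ x, π x = f (d x) (π (σ x)) := by
    intro x
    have h1 : Tendsto (fun n => g (n+1) x) atTop (nhds (π x)) :=
      (hπ x).comp (tendsto_add_atTop_nat 1)
    have h2 : Tendsto (fun n => g (n+1) x) atTop (nhds (f (d x) (π (σ x)))) := by
      simp_rw [hgs]
      exact ((hf (d x)).continuous.tendsto _).comp (hπ (σ x))
    exact tendsto_nhds_unique h1 h2
  -- the measure
  set μL : Measure ℝ := volume.restrict (Set.Ico 0 1) with hμL_def
  have hμLprob : IsProbabilityMeasure μL := by
    constructor
    rw [hμL_def, Measure.restrict_apply_univ, Real.volume_Ico]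
    norm_num
  set μ0 : Measure Y := Measure.map π μL with hμ0_def
  have hμ0prob : IsProbabilityMeasure μ0 := Measure.isProbabilityMeasure_map hπ_meas.aemeasurable
  refine ⟨μ0, hμ0prob, ?_⟩
  have hdisj : Pairwise (Function.onFun Disjoint J) := by
    intro i j hij
    rw [Function.onFun, Set.disjoint_left]
    intro x hxi hxj
    exact hij (huniq i j x hxi hxj)
  have hunion : ⋃ i, J i = Set.Ico (0:ℝ) 1 := by
    apply Set.Subset.antisymm
    · exact Set.iUnion_subset hJsub
    · intro x hx
      obtain ⟨i, hi⟩ := hcover x hx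
      exact Set.mem_iUnion.mpr ⟨i, hi⟩
  have hdecomp : μL = ∑ i, volume.restrict (J i) := by
    rw [hμL_def, ← hunion, Measure.restrict_iUnion hdisj (fun i => measurableSet_Ico)]
    exact Measure.sum_fintype _
  have hpiece : ∀ i, Measure.map π (volume.restrict (J i)) = a i • Measure.map (f i) μ0 := by
    intro i
    set gI : ℝ → ℝ := fun x => (x - L i) / A i with hgI_def
    have hgI_meas : Measurable gI := (measurable_id.sub measurable_const).div_const _
    have hgIpre : gI ⁻¹' (Set.Ico 0 1) = J i := by
      ext x
      simp only [Set.mem_preimage, Set.mem_Ico, hgI_def, hJ_def]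
      constructor
      · rintro ⟨h1, h2⟩
        rw [le_div_iff₀ (hA i)] at h1
        rw [div_lt_one (hA i)] at h2
        constructor <;> [linarith; linarith]
      · rintro ⟨h1, h2⟩
        rw [le_div_iff₀ (hA i), div_lt_one (hA i)]
        constructor <;> [linarith; linarith]
    have hmapgI : Measure.map gI volume = ENNReal.ofReal (A i) • volume := by
      have h1 : gI = (fun y => (A i)⁻¹ * y) ∘ (fun x => x + (-(L i))) := by
        funext x
        simp only [Function.comp_apply, hgI_def]
        rw [div_eq_inv_mul]
        ring
      rw [h1, ← Measure.map_map (measurable_const_mul _) (measurable_add_const _)]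
      rw [map_add_right_eq_self volume (-(L i))]
      rw [Real.map_volume_mul_left (inv_ne_zero (hA i).ne')]
      congr 1
      rw [inv_inv, abs_of_pos (hA i)]
    have hsmul : Measure.map gI (volume.restrict (J i)) = a i • μL := by
      rw [← hgIpre, ← Measure.restrict_map hgI_meas measurableSet_Ico, hmapgI,
        Measure.restrict_smul]
      rw [hμL_def]
      congr 1
      rw [hA_def]
      simp only
      rw [ENNReal.ofReal_coe_nnreal]
    have hπae : π =ᵐ[volume.restrict (J i)] (fun x => f i (π (gI x))) := by
      refine (ae_restrict_iff' measurableSet_Ico).mpr (Eventually.of_forall (fun x hx => ?_))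
      have hdx : d x = i := hdJ i x hx
      have hσx : σ x = gI x := by
        rw [hσ_def]
        simp only
        rw [hdx]
      rw [hπfix x, hdx, hσx]
    calc Measure.map π (volume.restrict (J i))
        = Measure.map (fun x => f i (π (gI x))) (volume.restrict (J i)) := Measure.map_congr hπae
      _ = Measure.map (f i) (Measure.map (π ∘ gI) (volume.restrict (J i))) := by
          rw [Measure.map_map (hf i).continuous.measurable (hπ_meas.comp hgI_meas)]
          rfl
      _ = Measure.map (f i) (Measure.map π (Measure.map gI (volume.restrict (J i)))) := by
          rw [Measure.map_map hπ_meas hgI_meas]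
      _ = Measure.map (f i) (Measure.map π (a i • μL)) := by rw [hsmul]
      _ = a i • Measure.map (f i) μ0 := by
          rw [Measure.map_smul, hμ0_def, Measure.map_smul]
  calc μ0 = Measure.map π (∑ i, volume.restrict (J i)) := by rw [hμ0_def, ← hdecomp]
    _ = ∑ i, Measure.map π (volume.restrict (J i)) := by
        rw [← Measure.sum_fintype, Measure.map_sum hπ_meas.aemeasurable, Measure.sum_fintype]
    _ = ∑ i, a i • Measure.map (f i) μ0 := Finset.sum_congr rfl (fun i _ => hpiece i)

open MeasureTheory in
theorem stmt_6 {Y : Type*} [MetricSpace Y] [CompactSpace Y] [Nonempty Y]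
    [MeasurableSpace Y] [BorelSpace Y]
    (m : ℕ) (f : Fin m → Y → Y) (lam : Fin m → NNReal)
    (hlam : ∀ i, lam i < 1) (hf : ∀ i, LipschitzWith (lam i) (f i))
    (a : Fin m → NNReal) (ha : ∀ i, 0 < a i) (hsum : ∑ i, a i = 1) :
    ∃! μ : Measure Y, IsProbabilityMeasure μ ∧
      μ = ∑ i, a i • Measure.map (f i) μ := by
  have hm : 0 < m := by
    rcases Nat.eq_zero_or_pos m with rfl | h
    · simpa using hsum
    · exact h
  obtain ⟨μ0, hprob, hinv⟩ := exists_aux m hm f lam hlam hf a ha hsum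
  refine ⟨μ0, ⟨hprob, hinv⟩, ?_⟩
  rintro ν ⟨hν1, hν2⟩
  haveI := hν1
  haveI := hprob
  exact unique_aux m f lam hlam hf a hsum ν μ0 hν2 hinv
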